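/- For each n ≥ 4, the number of acyclic orientations of the loopless Schreier graph B_n* of the Basilica group is: for n odd, (2^{2^{(n−1)/2}} − 2)^4 (2^{2^{(n+1)/2}} − 2) · Π_{i=1}^{(n−1)/2 − 1} (2^{2^i} − 2)^{3·2^{n−2i−1}}; for n even, (2^{2^{n/2}} − 2)^3 · Π_{i=1}^{n/2 − 1} (2^{2^i} − 2)^{3·2^{n−2i−1}}. Moreover, the counts for n = 1, 2, 3 are 2, 2^3, and 2^5·7, respectively. -/

import Mathlib

/-- A finite multigraph on a vertex set `V`: a finite edge type together with an
incidence map assigning to each edge its unordered pair of endpoints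
(loops and parallel edges are allowed). -/
structure Multigraph (V : Type) where
  /-- the type of edges -/
  Edge : Type
  /-- the edge type is finite -/
  fintypeEdge : Fintype Edge
  /-- equality of edges is decidable -/
  decEqEdge : DecidableEq Edge
  /-- the unordered pair of endpoints of an edge -/
  inc : Edge → Sym2 V

attribute [instance] Multigraph.fintypeEdge Multigraph.decEqEdge

namespace Multigraph

variable {V : Type} [Fintype V] [DecidableEq V]

/-- The simple graph underlying the spanning subgraph of `G` with edge set `A`:
two distinct vertices are adjacent iff some edge in `A` has them as endpoints. -/
def toSimple (G : Multigraph V) (A : Finset G.Edge) : SimpleGraph V :=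
  SimpleGraph.fromRel fun u v => ∃ e ∈ A, G.inc e = s(u, v)

/-- `G.comps A` is the number `k(A)` of connected components of the spanning
subgraph of `G` with edge set `A`. -/
noncomputable def comps (G : Multigraph V) (A : Finset G.Edge) : ℕ :=
  Nat.card (G.toSimple A).ConnectedComponent

/-- The rank `r(A) = |V| - k(A)` of the spanning subgraph with edge set `A`. -/
noncomputable def rk (G : Multigraph V) (A : Finset G.Edge) : ℕ :=
  Fintype.card V - G.comps A

/-- The nullity `n(A) = |E(A)| - r(A)` of the spanning subgraph with edge set `A`. -/
noncomputable def nullity (G : Multigraph V) (A : Finset G.Edge) : ℕ :=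
  A.card - G.rk A

/-- The Tutte polynomial
`T(G; x, y) = ∑_{A ⊆ E} (x - 1) ^ (r(E) - r(A)) * (y - 1) ^ n(A)`,
as a function of two real variables. -/
noncomputable def tutte (G : Multigraph V) (x y : ℝ) : ℝ :=
  ∑ A ∈ (Finset.univ : Finset G.Edge).powerset,
    (x - 1) ^ (G.rk Finset.univ - G.rk A) * (y - 1) ^ (G.nullity A)

/-- The reliability polynomial `R(G, p)`: the probability that, when each edge is
independently active with probability `p`, every pair of vertices is joined by a
path of active edges (i.e. the spanning subgraph of active edges is connected). -/
noncomputable def reliability (G : Multigraph V) (p : ℝ) : ℝ :=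
  ∑ A ∈ (Finset.univ : Finset G.Edge).powerset,
    if G.comps A = 1 then p ^ A.card * (1 - p) ^ (Fintype.card G.Edge - A.card) else 0

/-- The complexity `τ(G)`: the number of spanning subtrees of `G`, i.e. spanning
subgraphs which are connected and have `|V| - 1` edges. -/
noncomputable def treeCount (G : Multigraph V) : ℕ :=
  Nat.card {A : Finset G.Edge // G.comps A = 1 ∧ A.card + 1 = Fintype.card V}

/-- The number of connected spanning subgraphs of `G`. -/
noncomputable def connCount (G : Multigraph V) : ℕ :=
  Nat.card {A : Finset G.Edge // G.comps A = 1}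

/-- The number of spanning forests of `G`: spanning subgraphs containing no cycle,
i.e. with `|E(A)| = |V| - k(A)` (zero nullity). -/
noncomputable def forestCount (G : Multigraph V) : ℕ :=
  Nat.card {A : Finset G.Edge // A.card + G.comps A = Fintype.card V}

/-- `σ` is an orientation of `G` if it assigns to every edge an ordered pair of
vertices whose underlying unordered pair is the pair of endpoints of the edge. -/
def IsOrientation (G : Multigraph V) (σ : G.Edge → V × V) : Prop :=
  ∀ e, s((σ e).1, (σ e).2) = G.inc e

/-- The number of acyclic orientations of `G`: orientations admitting no directed
cycle. -/
noncomputable def acyclicOrientationCount (G : Multigraph V) : ℕ :=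
  Nat.card {σ : G.Edge → V × V //
    G.IsOrientation σ ∧ ∀ v : V, ¬ Relation.TransGen (fun u w => ∃ e, σ e = (u, w)) v v}

/-- A proper coloring of `G`: the two endpoints of every edge receive distinct
colors. -/
def ProperColoring (G : Multigraph V) {α : Type} (c : V → α) : Prop :=
  ∀ e, ¬ (Sym2.map c (G.inc e)).IsDiag

/-- The number of proper colorings of `G` with `k` colors (the value `χ(G, k)` of
the chromatic polynomial at the natural number `k`). -/
noncomputable def chromCount (G : Multigraph V) (k : ℕ) : ℕ :=
  Nat.card {c : V → Fin k // G.ProperColoring c}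

end Multigraph

mutual
  /-- The generator `a = e(b, id)` of the Basilica group, acting on the `n`-th
  level of the binary rooted tree: `a(1w) = 1w` and `a(0w) = 0 b(w)`. -/
  def basA : (n : ℕ) → (Fin n → Bool) → (Fin n → Bool)
    | 0, v => v
    | n + 1, v =>
      match v 0 with
      | true => v
      | false => Fin.cons false (basB n (Fin.tail v))

  /-- The generator `b = ε(a, id)` of the Basilica group, acting on the `n`-th
  level of the binary rooted tree: `b(1w) = 0w` and `b(0w) = 1 a(w)`. -/
  def basB : (n : ℕ) → (Fin n → Bool) → (Fin n → Bool)
    | 0, v => v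
    | n + 1, v =>
      match v 0 with
      | true => Fin.cons false (Fin.tail v)
      | false => Fin.cons true (basA n (Fin.tail v))
end

/-- The generator of the Basilica group indexed by a boolean tag. -/
def basGen (n : ℕ) : Bool → (Fin n → Bool) → (Fin n → Bool)
  | true => basA n
  | false => basB n

/-- The level-`n` Schreier graph `B_n` of the Basilica group: vertices are the
binary words of length `n`, and for each generator `s ∈ {a, b}` and each vertex
`v` there is one edge joining `v` and `s(v)` (a loop when `s(v) = v`). -/
def basilica (n : ℕ) : Multigraph (Fin n → Bool) where
  Edge := Bool × (Fin n → Bool)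
  fintypeEdge := inferInstance
  decEqEdge := inferInstance
  inc := fun e => s(e.2, basGen n e.1 e.2)

/-- The loopless level-`n` Schreier graph `B_n*` of the Basilica group: `B_n`
with all loops deleted. -/
def basilicaStar (n : ℕ) : Multigraph (Fin n → Bool) where
  Edge := { e : Bool × (Fin n → Bool) // basGen n e.1 e.2 ≠ e.2 }
  fintypeEdge := inferInstance
  decEqEdge := inferInstance
  inc := fun e => s(e.1.2, basGen n e.1.1 e.1.2)



section APIstuff

set_option linter.unusedSectionVars false
set_option linter.unusedVariables false

open Function

section OrbitAPI
variable {V : Type} [Fintype V] [DecidableEq V] {f : V → V}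

lemma exists_iterate_eq_self (hf : Function.Injective f) (v : V) :
    ∃ m, 0 < m ∧ f^[m] v = v := by
  obtain ⟨i, j, hne, heq⟩ := Finite.exists_ne_map_eq_of_infinite (fun k : ℕ => f^[k] v)
  rcases Nat.lt_or_ge i j with h | h
  · refine ⟨j - i, by omega, ?_⟩
    have : f^[i] (f^[j-i] v) = f^[i] v := by
      rw [← Function.iterate_add_apply]; simpa [Nat.add_sub_cancel' h.le] using heq.symm
    exact (hf.iterate i) this
  · have h' : j < i := by omega
    refine ⟨i - j, by omega, ?_⟩
    have : f^[j] (f^[i-j] v) = f^[j] v := by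
      rw [← Function.iterate_add_apply]; simpa [Nat.add_sub_cancel' h'.le] using heq
    exact (hf.iterate j) this

lemma mp_pos (hf : Function.Injective f) (v : V) : 0 < Function.minimalPeriod f v := by
  obtain ⟨m, hm, hfix⟩ := exists_iterate_eq_self hf v
  exact Function.IsPeriodicPt.minimalPeriod_pos hm hfix

lemma isPeriodicPt_mp (hf : Function.Injective f) (v : V) :
    f^[Function.minimalPeriod f v] v = v :=
  Function.isPeriodicPt_minimalPeriod f v

/-- The forward orbit of `v` under `f`. -/
noncomputable def orbF (f : V → V) (v : V) : Finset V :=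
  (Finset.range (Function.minimalPeriod f v)).image (fun k => f^[k] v)

lemma mem_orbF_iff (hf : Function.Injective f) {v w : V} :
    w ∈ orbF f v ↔ ∃ k, f^[k] v = w := by
  constructor
  · rintro h
    simp only [orbF, Finset.mem_image, Finset.mem_range] at h
    obtain ⟨k, -, hk⟩ := h; exact ⟨k, hk⟩
  · rintro ⟨k, hk⟩
    simp only [orbF, Finset.mem_image, Finset.mem_range]
    exact ⟨k % Function.minimalPeriod f v, Nat.mod_lt _ (mp_pos hf v),
      by rw [Function.iterate_mod_minimalPeriod_eq]; exact hk⟩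

lemma self_mem_orbF (hf : Function.Injective f) (v : V) : v ∈ orbF f v :=
  (mem_orbF_iff hf).2 ⟨0, rfl⟩

lemma orbF_rev (hf : Function.Injective f) {v w : V} (k : ℕ) (hk : f^[k] v = w) :
    ∃ l, f^[l] w = v := by
  refine ⟨k * (Function.minimalPeriod f v - 1), ?_⟩
  rw [← hk, ← Function.iterate_add_apply]
  have hpos := mp_pos hf v
  have : k * (Function.minimalPeriod f v - 1) + k = k * Function.minimalPeriod f v := by
    conv_rhs => rw [← Nat.succ_pred_eq_of_pos hpos, Nat.mul_succ, Nat.pred_eq_sub_one]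
  rw [this, Nat.mul_comm, Function.iterate_mul]
  exact Function.iterate_fixed (isPeriodicPt_mp hf v) k

lemma orbF_eq_of_mem (hf : Function.Injective f) {v w : V} (h : w ∈ orbF f v) :
    orbF f w = orbF f v := by
  obtain ⟨k, hk⟩ := (mem_orbF_iff hf).1 h
  obtain ⟨l, hl⟩ := orbF_rev hf k hk
  apply Finset.ext; intro x
  rw [mem_orbF_iff hf, mem_orbF_iff hf]
  constructor
  · rintro ⟨j, hj⟩; exact ⟨j + k, by rw [Function.iterate_add_apply, hk, hj]⟩
  · rintro ⟨j, hj⟩; exact ⟨j + l, by rw [Function.iterate_add_apply, hl, hj]⟩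

lemma card_orbF (hf : Function.Injective f) (v : V) :
    (orbF f v).card = Function.minimalPeriod f v := by
  rw [orbF, Finset.card_image_of_injOn, Finset.card_range]
  intro i hi j hj hij
  exact Function.iterate_injOn_Iio_minimalPeriod (by simpa using Finset.mem_range.1 hi)
    (by simpa using Finset.mem_range.1 hj) hij

lemma mp_eq_of_mem_orbF (hf : Function.Injective f) {v w : V} (h : w ∈ orbF f v) :
    Function.minimalPeriod f w = Function.minimalPeriod f v := by
  rw [← card_orbF hf, ← card_orbF hf, orbF_eq_of_mem hf h]

lemma apply_mem_orbF (hf : Function.Injective f) {v w : V} (h : w ∈ orbF f v) :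
    f w ∈ orbF f v := by
  obtain ⟨k, hk⟩ := (mem_orbF_iff hf).1 h
  exact (mem_orbF_iff hf).2 ⟨1 + k, by rw [Function.iterate_add_apply, hk, Function.iterate_one]⟩

lemma mp_eq_one_iff (v : V) : Function.minimalPeriod f v = 1 ↔ f v = v :=
  Function.minimalPeriod_eq_one_iff_isFixedPt

lemma moving_of_mem_orbF (hf : Function.Injective f) {v w : V} (h : w ∈ orbF f v)
    (hv : f v ≠ v) : f w ≠ w := by
  intro hw
  exact hv ((mp_eq_one_iff v).1 (by rw [← mp_eq_of_mem_orbF hf h, mp_eq_one_iff]; exact hw))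

end OrbitAPI

end APIstuff
section BasilicaBasics

open Function

abbrev Vt (n : ℕ) := Fin n → Bool

lemma basA_succ (n : ℕ) (v : Vt (n+1)) :
    basA (n+1) v = match v 0 with
      | true => v
      | false => Fin.cons false (basB n (Fin.tail v)) := by
  rw [basA]

lemma basB_succ (n : ℕ) (v : Vt (n+1)) :
    basB (n+1) v = match v 0 with
      | true => Fin.cons false (Fin.tail v)
      | false => Fin.cons true (basA n (Fin.tail v)) := by
  rw [basB]

lemma basA_cons_true (n : ℕ) (w : Vt n) :
    basA (n+1) (Fin.cons true w) = Fin.cons true w := by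
  rw [basA_succ]; simp

lemma basA_cons_false (n : ℕ) (w : Vt n) :
    basA (n+1) (Fin.cons false w) = Fin.cons false (basB n w) := by
  rw [basA_succ]; simp

lemma basB_cons_true (n : ℕ) (w : Vt n) :
    basB (n+1) (Fin.cons true w) = Fin.cons false w := by
  rw [basB_succ]; simp

lemma basB_cons_false (n : ℕ) (w : Vt n) :
    basB (n+1) (Fin.cons false w) = Fin.cons true (basA n w) := by
  rw [basB_succ]; simp

lemma basB_head_cons (n : ℕ) (x : Bool) (w : Vt n) :
    basB (n+1) (Fin.cons x w) 0 = !x := by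
  cases x
  · rw [basB_cons_false]; simp
  · rw [basB_cons_true]; simp

lemma basB_head (n : ℕ) (v : Vt (n+1)) : basB (n+1) v 0 = !(v 0) := by
  conv_lhs => rw [← Fin.cons_self_tail v]
  rw [basB_head_cons]

lemma basA_zero : basA 0 = id := rfl
lemma basB_zero : basB 0 = id := rfl

lemma bas_injective : ∀ n : ℕ, Function.Injective (basA n) ∧ Function.Injective (basB n) := by
  intro n
  induction n with
  | zero => exact ⟨fun x y h => h, fun x y h => h⟩
  | succ n ih =>
    constructor
    · intro v w h
      rw [← Fin.cons_self_tail v, ← Fin.cons_self_tail w] at h ⊢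
      rcases hv : v 0 with _ | _ <;> rcases hw : w 0 with _ | _ <;>
        rw [hv, hw] at h <;>
        simp only [basA_cons_true, basA_cons_false] at h
      · have h1 := congrFun h 0; simp at h1
        have h2 : basB n (Fin.tail v) = basB n (Fin.tail w) := by
          have := congrArg Fin.tail h; simpa using this
        rw [ih.2 h2]
      · have h1 := congrFun h 0; simp at h1
      · have h1 := congrFun h 0; simp at h1
      · exact h
    · intro v w h
      rw [← Fin.cons_self_tail v, ← Fin.cons_self_tail w] at h ⊢
      rcases hv : v 0 with _ | _ <;> rcases hw : w 0 with _ | _ <;>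
        rw [hv, hw] at h <;>
        simp only [basB_cons_true, basB_cons_false] at h
      · have h2 : basA n (Fin.tail v) = basA n (Fin.tail w) := by
          have := congrArg Fin.tail h; simpa using this
        rw [ih.1 h2]
      · have h1 := congrFun h 0; simp at h1
      · have h1 := congrFun h 0; simp at h1
      · have h2 : Fin.tail v = Fin.tail w := by
          have := congrArg Fin.tail h; simpa using this
        rw [h2]

lemma basA_injective (n : ℕ) : Function.Injective (basA n) := (bas_injective n).1
lemma basB_injective (n : ℕ) : Function.Injective (basB n) := (bas_injective n).2

lemma basGen_injective (n : ℕ) (t : Bool) : Function.Injective (basGen n t) := by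
  cases t
  · exact basB_injective n
  · exact basA_injective n

lemma basB_ne (n : ℕ) (v : Vt (n+1)) : basB (n+1) v ≠ v := by
  intro h
  have := congrFun h 0
  rw [basB_head] at this
  cases hv : v 0 <;> rw [hv] at this <;> simp at this

lemma basB_sq (n : ℕ) (x : Bool) (w : Vt n) :
    basB (n+1) (basB (n+1) (Fin.cons x w)) = Fin.cons x (basA n w) := by
  cases x
  · rw [basB_cons_false, basB_cons_true]
  · rw [basB_cons_true, basB_cons_false]

lemma basB_iter_even (n : ℕ) (k : ℕ) (x : Bool) (w : Vt n) :
    (basB (n+1))^[2*k] (Fin.cons x w) = Fin.cons x ((basA n)^[k] w) := by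
  induction k with
  | zero => simp
  | succ k ih =>
    have h2 : 2*(k+1) = 2 + 2*k := by ring
    rw [h2, Function.iterate_add_apply, ih]
    rw [show (2:ℕ) = 1+1 from rfl, Function.iterate_add_apply]
    simp only [Function.iterate_one]
    rw [basB_sq, Function.iterate_succ_apply']

lemma basA_iter_false (n : ℕ) (k : ℕ) (w : Vt n) :
    (basA (n+1))^[k] (Fin.cons false w) = Fin.cons false ((basB n)^[k] w) := by
  induction k with
  | zero => simp
  | succ k ih =>
    rw [Function.iterate_succ_apply', ih, basA_cons_false, Function.iterate_succ_apply']

lemma mpA_cons_true (n : ℕ) (w : Vt n) :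
    Function.minimalPeriod (basA (n+1)) (Fin.cons true w) = 1 :=
  (mp_eq_one_iff _).2 (basA_cons_true n w)

lemma mpA_cons_false (n : ℕ) (w : Vt n) :
    Function.minimalPeriod (basA (n+1)) (Fin.cons false w) =
      Function.minimalPeriod (basB n) w := by
  have key : ∀ k : ℕ, Function.IsPeriodicPt (basA (n+1)) k (Fin.cons false w) ↔
      Function.IsPeriodicPt (basB n) k w := by
    intro k
    unfold Function.IsPeriodicPt Function.IsFixedPt
    rw [basA_iter_false]
    constructor
    · intro h
      have := congrArg Fin.tail h; simpa using this
    · intro h; rw [h]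
  apply Nat.dvd_antisymm
  · exact Function.IsPeriodicPt.minimalPeriod_dvd ((key _).2
      (Function.isPeriodicPt_minimalPeriod _ _))
  · exact Function.IsPeriodicPt.minimalPeriod_dvd ((key _).1
      (Function.isPeriodicPt_minimalPeriod _ _))

lemma basB_iter_odd_head (n : ℕ) (k : ℕ) (v : Vt (n+1)) (hk : ¬ Even k) :
    ((basB (n+1))^[k] v) 0 = !(v 0) := by
  induction k with
  | zero => simp at hk
  | succ k ih =>
    rw [Function.iterate_succ_apply', basB_head]
    rcases Nat.even_or_odd k with h | h
    · -- k even, k+1 odd: B^[k] v has head = v 0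
      congr 1
      obtain ⟨j, hj⟩ := h
      rw [← Fin.cons_self_tail v, show k = 2*j by omega, basB_iter_even]
      simp
    · have : Even (k+1) := by obtain ⟨j, hj⟩ := h; exact ⟨j+1, by omega⟩
      exact absurd this hk

lemma mpB_cons (n : ℕ) (x : Bool) (w : Vt n) :
    Function.minimalPeriod (basB (n+1)) (Fin.cons x w) =
      2 * Function.minimalPeriod (basA n) w := by
  have hmpB : Function.IsPeriodicPt (basB (n+1))
      (2 * Function.minimalPeriod (basA n) w) (Fin.cons x w) := by
    unfold Function.IsPeriodicPt Function.IsFixedPt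
    rw [basB_iter_even, Function.isPeriodicPt_minimalPeriod]
  have heven : Even (Function.minimalPeriod (basB (n+1)) (Fin.cons x w)) := by
    by_contra hodd
    have := Function.isPeriodicPt_minimalPeriod (basB (n+1)) (Fin.cons x w)
    have h0 := congrFun this 0
    rw [basB_iter_odd_head n _ _ hodd] at h0
    cases hx : (Fin.cons x w : Vt (n+1)) 0 <;> rw [hx] at h0 <;> simp at h0
  apply Nat.dvd_antisymm
  · exact Function.IsPeriodicPt.minimalPeriod_dvd hmpB
  · obtain ⟨j, hj⟩ := heven
    have hper := Function.isPeriodicPt_minimalPeriod (basB (n+1)) (Fin.cons x w)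
    rw [show Function.minimalPeriod (basB (n+1)) (Fin.cons x w) = 2*j by omega] at hper
    unfold Function.IsPeriodicPt Function.IsFixedPt at hper
    rw [basB_iter_even] at hper
    have htail : (basA n)^[j] w = w := by
      have := congrArg Fin.tail hper; simpa using this
    obtain ⟨c, hc⟩ := Function.IsPeriodicPt.minimalPeriod_dvd htail
    exact ⟨c, by rw [Nat.mul_assoc, ← hc]; omega⟩

end BasilicaBasics
section OrbStructure

open Function

lemma orbF_of_fixed {V : Type} [Fintype V] [DecidableEq V] {f : V → V}
    (hf : Function.Injective f) {v : V} (hv : f v = v) : orbF f v = {v} := by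
  ext x
  rw [mem_orbF_iff hf, Finset.mem_singleton]
  constructor
  · rintro ⟨k, hk⟩; rw [Function.iterate_fixed hv] at hk; exact hk.symm
  · rintro rfl; exact ⟨0, rfl⟩

lemma orbA_cons_true (n : ℕ) (w : Vt n) :
    orbF (basA (n+1)) (Fin.cons true w) = {Fin.cons true w} :=
  orbF_of_fixed (basA_injective (n+1)) (basA_cons_true n w)

lemma orbA_cons_false (n : ℕ) (w : Vt n) :
    orbF (basA (n+1)) (Fin.cons false w) = (orbF (basB n) w).image (Fin.cons false) := by
  ext x
  rw [mem_orbF_iff (basA_injective (n+1)), Finset.mem_image]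
  constructor
  · rintro ⟨k, hk⟩
    exact ⟨(basB n)^[k] w, (mem_orbF_iff (basB_injective n)).2 ⟨k, rfl⟩,
      by rw [← hk, basA_iter_false]⟩
  · rintro ⟨u, hu, rfl⟩
    obtain ⟨k, hk⟩ := (mem_orbF_iff (basB_injective n)).1 hu
    exact ⟨k, by rw [basA_iter_false, hk]⟩

lemma orbB_cons (n : ℕ) (x : Bool) (w : Vt n) :
    orbF (basB (n+1)) (Fin.cons x w) =
      (orbF (basA n) w).image (Fin.cons false) ∪ (orbF (basA n) w).image (Fin.cons true) := by
  have hA := basA_injective n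
  have hB := basB_injective (n+1)
  ext y
  rw [mem_orbF_iff hB, Finset.mem_union, Finset.mem_image, Finset.mem_image]
  constructor
  · rintro ⟨k, hk⟩
    rcases Nat.even_or_odd k with ⟨j, hj⟩ | ⟨j, hj⟩
    · rw [show k = 2*j by omega, basB_iter_even] at hk
      have hmem : (basA n)^[j] w ∈ orbF (basA n) w := (mem_orbF_iff hA).2 ⟨j, rfl⟩
      cases x
      · exact Or.inl ⟨_, hmem, hk⟩
      · exact Or.inr ⟨_, hmem, hk⟩
    · rw [show k = 1 + 2*j by omega, Function.iterate_add_apply, basB_iter_even,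
        Function.iterate_one] at hk
      cases x
      · rw [basB_cons_false] at hk
        exact Or.inr ⟨_, (mem_orbF_iff hA).2 ⟨j+1, by rw [Function.iterate_succ_apply']⟩, hk⟩
      · rw [basB_cons_true] at hk
        exact Or.inl ⟨_, (mem_orbF_iff hA).2 ⟨j, rfl⟩, hk⟩
  · have hper := isPeriodicPt_mp hA w
    have hpos := mp_pos hA w
    rintro (⟨u, hu, rfl⟩ | ⟨u, hu, rfl⟩)
    · obtain ⟨k, hk⟩ := (mem_orbF_iff hA).1 hu
      cases x
      · exact ⟨2*k, by rw [basB_iter_even, hk]⟩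
      · -- need b^[2k+1] (cons true w) = cons false (a^[k] w)
        refine ⟨1 + 2*k, ?_⟩
        rw [Function.iterate_add_apply, basB_iter_even, Function.iterate_one,
          basB_cons_true, hk]
    · obtain ⟨k, hk⟩ := (mem_orbF_iff hA).1 hu
      cases x
      · -- x = false : b^[2j+1](cons false w) = cons true (a^[j+1] w); choose j with j+1 ≡ k
        refine ⟨1 + 2*(k + (Function.minimalPeriod (basA n) w - 1)), ?_⟩
        rw [Function.iterate_add_apply, basB_iter_even, Function.iterate_one,
          basB_cons_false]
        congr 1
        have h1 : basA n ((basA n)^[k + (Function.minimalPeriod (basA n) w - 1)] w) =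
            (basA n)^[k + (Function.minimalPeriod (basA n) w - 1) + 1] w :=
          (Function.iterate_succ_apply' _ _ _).symm
        rw [h1, ← hk]
        have h2 : (k + (Function.minimalPeriod (basA n) w - 1)) + 1 =
            k + Function.minimalPeriod (basA n) w := by omega
        rw [h2, Function.iterate_add_apply, hper]
      · exact ⟨2*k, by rw [basB_iter_even, hk]⟩

end OrbStructure
section Gluing

variable {V : Type} [Fintype V] [DecidableEq V] {ι : Type}

/-- Hyperforest condition: each set meets the union of the previous ones
(plus initial `S`) in at most one vertex. -/
def Hyper (T : ι → Finset V) : List ι → Finset V → Prop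
  | [], _ => True
  | i :: L, S => (T i ∩ S).card ≤ 1 ∧ Hyper T L (S ∪ T i)

/-- Gluing local height functions along a hyperforest. -/
lemma hyper_glue (T : ι → Finset V) (R : ι → V → V → Prop) :
    ∀ (L : List ι) (S : Finset V) (f0 : V → ℤ),
    Hyper T L S →
    (∀ i ∈ L, ∀ u w, R i u w → u ∈ T i ∧ w ∈ T i) →
    (∀ i ∈ L, ∃ h : V → ℤ, ∀ u w, R i u w → h u < h w) →
    ∃ f : V → ℤ, (∀ v ∈ S, f v = f0 v) ∧ ∀ i ∈ L, ∀ u w, R i u w → f u < f w := by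
  intro L
  induction L with
  | nil => exact fun S f0 _ _ _ => ⟨f0, fun v _ => rfl, fun i hi => absurd hi (by simp)⟩
  | cons p L ih =>
    intro S f0 hhyp hloc hht
    obtain ⟨hcard, hhyp'⟩ := hhyp
    obtain ⟨h, hh⟩ := hht p (by simp)
    set offset : ℤ := if hne : (T p ∩ S).Nonempty then f0 hne.choose - h hne.choose else 0
      with hoffset
    set f1 : V → ℤ := fun v => if v ∈ T p ∧ v ∉ S then h v + offset else f0 v with hf1
    have hf1S : ∀ v ∈ S, f1 v = f0 v := by
      intro v hv
      simp only [hf1]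
      rw [if_neg]; tauto
    have hf1T : ∀ x ∈ T p, f1 x = h x + offset := by
      intro x hx
      by_cases hxS : x ∈ S
      · have hne : (T p ∩ S).Nonempty := ⟨x, Finset.mem_inter.2 ⟨hx, hxS⟩⟩
        have hv0 := hne.choose_spec
        have hxv0 : x = hne.choose :=
          Finset.card_le_one.1 hcard x (Finset.mem_inter.2 ⟨hx, hxS⟩) _ hv0
        simp only [hf1]
        rw [if_neg (by tauto), hxv0, hoffset, dif_pos hne]
        ring
      · simp only [hf1]; rw [if_pos ⟨hx, hxS⟩]
    obtain ⟨f, hfS, hfL⟩ := ih (S ∪ T p) f1 hhyp'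
      (fun i hi => hloc i (by simp [hi])) (fun i hi => hht i (by simp [hi]))
    refine ⟨f, ?_, ?_⟩
    · intro v hv
      rw [hfS v (Finset.mem_union_left _ hv), hf1S v hv]
    · intro i hi u w hR
      rcases List.mem_cons.1 hi with rfl | hi'
      · obtain ⟨hu, hw⟩ := hloc i (by simp) u w hR
        rw [hfS u (Finset.mem_union_right _ hu), hfS w (Finset.mem_union_right _ hw),
          hf1T u hu, hf1T w hw]
        have := hh u w hR
        omega
      · exact hfL i hi' u w hR

end Gluing
section CycleHeight

open Function

lemma cycle_height {V : Type} [Fintype V] [DecidableEq V] {g : V → V}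
    (hg : Function.Injective g) (v : V) (hv : g v ≠ v) (D : V → Bool)
    (hnc : ¬ ∀ u ∈ orbF g v, D u = D v) :
    ∃ h : V → ℤ, ∀ u ∈ orbF g v,
      (D u = true → h u < h (g u)) ∧ (D u = false → h (g u) < h u) := by
  set m := Function.minimalPeriod g v with hm
  set x : ℕ → V := fun j => g^[j] v with hx
  have hmpos : 0 < m := mp_pos hg v
  have hperiod : x m = v := isPeriodicPt_mp hg v
  have hmem_iff : ∀ u : V, u ∈ orbF g v ↔ ∃ j, j < m ∧ x j = u := by
    intro u
    simp only [orbF, Finset.mem_image, Finset.mem_range, ← hm, hx]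
  have hinj : ∀ i, i < m → ∀ j, j < m → x i = x j → i = j := by
    intro i hi j hj hij
    exact Function.iterate_injOn_Iio_minimalPeriod (by simpa using hi) (by simpa using hj) hij
  set P := ((Finset.range m).filter (fun j => D (x j) = true)).card with hP
  set Q := ((Finset.range m).filter (fun j => ¬ (D (x j) = true))).card with hQ
  have hPQ : P + Q = m := by
    rw [hP, hQ, Finset.card_filter_add_card_filter_not, Finset.card_range]
  -- both directions occur
  obtain ⟨u0, hu0, hDu0⟩ : ∃ u ∈ orbF g v, D u ≠ D v := by
    by_contra hc
    push_neg at hc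
    exact hnc hc
  obtain ⟨j0, hj0, hxj0⟩ := (hmem_iff u0).1 hu0
  have hvx : v = x 0 := rfl
  have hPpos : 0 < P := by
    rw [hP, Finset.card_pos]
    cases hDv : D v
    · exact ⟨j0, Finset.mem_filter.2 ⟨Finset.mem_range.2 hj0, by
        rw [hxj0]; revert hDu0; cases hDu : D u0 <;> simp [hDv]⟩⟩
    · exact ⟨0, Finset.mem_filter.2 ⟨Finset.mem_range.2 hmpos, by rw [← hvx, hDv]⟩⟩
  have hQpos : 0 < Q := by
    rw [hQ, Finset.card_pos]
    cases hDv : D v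
    · exact ⟨0, Finset.mem_filter.2 ⟨Finset.mem_range.2 hmpos, by rw [← hvx, hDv]; simp⟩⟩
    · exact ⟨j0, Finset.mem_filter.2 ⟨Finset.mem_range.2 hj0, by
        rw [hxj0]; revert hDu0; cases hDu : D u0 <;> simp [hDv]⟩⟩
  set weight : ℕ → ℤ := fun j => if D (x j) = true then (Q : ℤ) else -(P : ℤ) with hweight
  set Ssum : ℕ → ℤ := fun j => ∑ i ∈ Finset.range j, weight i with hSsum
  set h : V → ℤ := fun u => ∑ j ∈ Finset.range m, if x j = u then Ssum j else 0 with hh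
  have hhx : ∀ j, j < m → h (x j) = Ssum j := by
    intro j hj
    rw [hh]
    beta_reduce
    rw [Finset.sum_eq_single_of_mem j (Finset.mem_range.2 hj)]
    · rw [if_pos rfl]
    · intro i hi hne
      rw [if_neg]
      intro hxe
      exact hne (hinj i (Finset.mem_range.1 hi) j hj hxe)
  have hSm : Ssum m = 0 := by
    rw [hSsum]
    beta_reduce
    rw [← Finset.sum_filter_add_sum_filter_not (Finset.range m) (fun j => D (x j) = true)]
    have h1 : ∑ i ∈ (Finset.range m).filter (fun j => D (x j) = true), weight i
        = (P : ℤ) * Q := by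
      have hc : ∀ i ∈ (Finset.range m).filter (fun j => D (x j) = true),
          weight i = (Q : ℤ) := by
        intro i hi
        simp only [hweight]
        rw [if_pos (Finset.mem_filter.1 hi).2]
      rw [Finset.sum_congr rfl hc, Finset.sum_const, hP]
      simp [mul_comm]
    have h2 : ∑ i ∈ (Finset.range m).filter (fun j => ¬ (D (x j) = true)), weight i
        = -((Q : ℤ) * P) := by
      have hc : ∀ i ∈ (Finset.range m).filter (fun j => ¬ (D (x j) = true)),
          weight i = -(P : ℤ) := by
        intro i hi
        simp only [hweight]
        rw [if_neg (Finset.mem_filter.1 hi).2]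
      rw [Finset.sum_congr rfl hc, Finset.sum_const, hQ]
      simp [mul_comm]
    rw [h1, h2]; ring
  refine ⟨h, ?_⟩
  intro u hu
  obtain ⟨j, hj, hxj⟩ := (hmem_iff u).1 hu
  have hgu : g u = x (j+1) := by
    rw [← hxj]
    exact (Function.iterate_succ_apply' g j v).symm
  have hDux : D u = D (x j) := by rw [hxj]
  have hSsucc : Ssum (j+1) = Ssum j + weight j := Finset.sum_range_succ _ _
  rcases Nat.lt_or_ge (j+1) m with hlt | hge
  · rw [hgu, hhx (j+1) hlt, ← hxj, hhx j hj, hSsucc]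
    constructor
    · intro hd; rw [hxj] at hd
      have : weight j = (Q : ℤ) := by rw [hweight]; simp only [← hDux, hxj, hd, if_true]
      omega
    · intro hd; rw [hxj] at hd
      have : weight j = -(P : ℤ) := by
        rw [hweight]; simp only [← hDux, hxj, hd]; simp
      omega
  · have hjm : j + 1 = m := by omega
    have hgu0 : g u = v := by rw [hgu, hjm, hperiod]
    have hSj : Ssum j + weight j = 0 := by rw [← hSsucc, hjm, hSm]
    rw [hgu0, hvx, hhx 0 hmpos, ← hxj, hhx j hj]
    have hS0 : Ssum 0 = 0 := rfl
    constructor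
    · intro hd; rw [hxj] at hd
      have : weight j = (Q : ℤ) := by rw [hweight]; simp only [← hDux, hxj, hd, if_true]
      omega
    · intro hd; rw [hxj] at hd
      have : weight j = -(P : ℤ) := by
        rw [hweight]; simp only [← hDux, hxj, hd]; simp
      omega

end CycleHeight
section BasListSection

open Function

noncomputable def eOrb {n : ℕ} (p : Bool × Vt n) : Finset (Vt n) := orbF (basGen n p.1) p.2

lemma basGen_true (n : ℕ) : basGen n true = basA n := rfl
lemma basGen_false (n : ℕ) : basGen n false = basB n := rfl

noncomputable def basList : (n : ℕ) → List (Bool × Vt n)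
  | 0 => [(true, fun i => i.elim0), (false, fun i => i.elim0)]
  | n+1 => (basList n).map (fun p => (!p.1, Fin.cons false p.2))
      ++ (Finset.univ : Finset (Vt n)).toList.map (fun w => (true, Fin.cons true w))

lemma vt_zero_eq (v w : Vt 0) : v = w := by funext i; exact i.elim0

lemma mem_consImage {n : ℕ} {x : Bool} {T : Finset (Vt n)} {a : Vt (n+1)} :
    a ∈ T.image (Fin.cons x) ↔ a 0 = x ∧ Fin.tail a ∈ T := by
  rw [Finset.mem_image]
  constructor
  · rintro ⟨u, hu, rfl⟩
    simp [Fin.tail_cons, hu]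
  · rintro ⟨h0, ht⟩
    exact ⟨Fin.tail a, ht, by rw [← h0, Fin.cons_self_tail]⟩

lemma eq_of_head_tail {n : ℕ} {a b : Vt (n+1)} (h0 : a 0 = b 0)
    (ht : Fin.tail a = Fin.tail b) : a = b := by
  rw [← Fin.cons_self_tail a, ← Fin.cons_self_tail b, h0, ht]

/-- orbit of a mapped entry -/
lemma eOrb_map_true (n : ℕ) (u : Vt n) :
    eOrb ((false, Fin.cons false u) : Bool × Vt (n+1)) =
      (eOrb (true, u)).image (Fin.cons false) ∪ (eOrb (true, u)).image (Fin.cons true) := by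
  show orbF (basB (n+1)) (Fin.cons false u) = _
  rw [orbB_cons]; rfl

lemma eOrb_map_false (n : ℕ) (u : Vt n) :
    eOrb ((true, Fin.cons false u) : Bool × Vt (n+1)) =
      (eOrb (false, u)).image (Fin.cons false) := by
  show orbF (basA (n+1)) (Fin.cons false u) = _
  rw [orbA_cons_false]; rfl

lemma eOrb_singleton (n : ℕ) (w : Vt n) :
    eOrb ((true, Fin.cons true w) : Bool × Vt (n+1)) = {Fin.cons true w} := by
  show orbF (basA (n+1)) (Fin.cons true w) = _
  rw [orbA_cons_true]

/-- Coverage: every orbit of either generator is represented in `basList`. -/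
lemma basList_cover : ∀ (n : ℕ) (t : Bool) (v : Vt n),
    ∃ p ∈ basList n, p.1 = t ∧ v ∈ eOrb p := by
  intro n
  induction n with
  | zero =>
    intro t v
    refine ⟨(t, fun i => i.elim0), ?_, rfl, ?_⟩
    · cases t <;> simp [basList]
    · rw [vt_zero_eq v (fun i => i.elim0)]
      exact self_mem_orbF (basGen_injective 0 t) _
  | succ n ih =>
    intro t v
    have hv : v = Fin.cons (v 0) (Fin.tail v) := (Fin.cons_self_tail v).symm
    cases t
    · -- tag b : use a mapped a-entry
      obtain ⟨p, hp, hpt, hmem⟩ := ih true (Fin.tail v)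
      refine ⟨(!p.1, Fin.cons false p.2), ?_, by rw [hpt]; rfl, ?_⟩
      · rw [basList]
        exact List.mem_append_left _ (List.mem_map.2 ⟨p, hp, rfl⟩)
      · obtain ⟨t', u⟩ := p
        cases hpt
        show v ∈ eOrb ((false, Fin.cons false u) : Bool × Vt (n+1))
        rw [eOrb_map_true]
        rcases h0 : v 0 with _ | _
        · exact Finset.mem_union_left _ (mem_consImage.2 ⟨h0, hmem⟩)
        · exact Finset.mem_union_right _ (mem_consImage.2 ⟨h0, hmem⟩)
    · -- tag a
      rcases h0 : v 0 with _ | _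
      · -- head false: mapped b-entry
        obtain ⟨p, hp, hpt, hmem⟩ := ih false (Fin.tail v)
        refine ⟨(!p.1, Fin.cons false p.2), ?_, by rw [hpt]; rfl, ?_⟩
        · rw [basList]
          exact List.mem_append_left _ (List.mem_map.2 ⟨p, hp, rfl⟩)
        · obtain ⟨t', u⟩ := p
          cases hpt
          show v ∈ eOrb ((true, Fin.cons false u) : Bool × Vt (n+1))
          rw [eOrb_map_false]
          exact mem_consImage.2 ⟨h0, hmem⟩
      · -- head true: appended singleton
        refine ⟨(true, Fin.cons true (Fin.tail v)), ?_, rfl, ?_⟩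
        · rw [basList]
          refine List.mem_append_right _ (List.mem_map.2 ⟨Fin.tail v, ?_, rfl⟩)
          simp [Finset.mem_toList]
        · rw [eOrb_singleton, Finset.mem_singleton]
          conv_lhs => rw [hv]
          rw [h0]

/-- Strengthened hyperforest invariant with per-tag accumulators. -/
def HypT {n : ℕ} : List (Bool × Vt n) → Finset (Vt n) → Finset (Vt n) → Prop
  | [], _, _ => True
  | p :: L, Sa, Sb =>
      (eOrb p ∩ (Sa ∪ Sb)).card ≤ 1 ∧
      Disjoint (eOrb p) (if p.1 then Sa else Sb) ∧
      HypT L (if p.1 then Sa ∪ eOrb p else Sa) (if p.1 then Sb else Sb ∪ eOrb p)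

lemma hypT_congr {n : ℕ} {L : List (Bool × Vt n)} {Sa Sb Sa' Sb' : Finset (Vt n)}
    (h : HypT L Sa Sb) (ha : Sa = Sa') (hb : Sb = Sb') : HypT L Sa' Sb' := by
  subst ha; subst hb; exact h

lemma hypT_singletons (n : ℕ) : ∀ (l : List (Vt n)), l.Nodup →
    ∀ (A B : Finset (Vt (n+1))), (∀ w ∈ l, Fin.cons true w ∉ A) →
    HypT (l.map (fun w => ((true, Fin.cons true w) : Bool × Vt (n+1)))) A B := by
  intro l
  induction l with
  | nil => intro _ A B _; trivial
  | cons w l ih =>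
    intro hnd A B hA
    refine ⟨?_, ?_, ?_⟩
    · rw [eOrb_singleton]
      calc ({Fin.cons true w} ∩ (A ∪ B)).card ≤ ({Fin.cons true w} : Finset (Vt (n+1))).card :=
            Finset.card_le_card (Finset.inter_subset_left)
        _ = 1 := Finset.card_singleton _
    · rw [eOrb_singleton, if_pos rfl]
      rw [Finset.disjoint_singleton_left]
      exact hA w (by simp)
    · refine ih (List.nodup_cons.1 hnd).2 (A ∪ eOrb (true, Fin.cons true w)) B ?_
      intro w' hw'
      rw [Finset.mem_union, eOrb_singleton, Finset.mem_singleton]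
      push_neg
      constructor
      · exact hA w' (by simp [hw'])
      · intro hc
        have : w' = w := Fin.cons_right_injective _ hc
        exact absurd (this ▸ hw') (List.nodup_cons.1 hnd).1

lemma hypT_map_append (n : ℕ) :
    ∀ (L : List (Bool × Vt n)) (Sa Sb : Finset (Vt n)), HypT L Sa Sb →
    ∀ (l : List (Vt n)), l.Nodup →
    HypT ((L.map (fun p => (!p.1, Fin.cons false p.2)))
          ++ (l.map (fun w => ((true, Fin.cons true w) : Bool × Vt (n+1)))))
      (Sb.image (Fin.cons false))
      (Sa.image (Fin.cons false) ∪ Sa.image (Fin.cons true)) := by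
  intro L
  induction L with
  | nil =>
    intro Sa Sb _ l hnd
    simp only [List.map_nil, List.nil_append]
    apply hypT_singletons n l hnd
    intro w hw hc
    rw [mem_consImage] at hc
    simp at hc
  | cons p L ih =>
    intro Sa Sb hyp l hnd
    obtain ⟨hd1, hd2, hd3⟩ := hyp
    obtain ⟨t, u⟩ := p
    have hd1' := Finset.card_le_one.1 hd1
    simp only [List.map_cons, List.cons_append]
    cases t
    · -- b-entry (false, u) ↦ a-entry (true, cons false u)
      simp only [Bool.not_false]
      simp only [if_neg Bool.false_ne_true] at hd2 hd3
      refine ⟨?_, ?_, ?_⟩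
      · rw [eOrb_map_false]
        apply Finset.card_le_one.2
        intro a ha b hb
        rw [Finset.mem_inter, mem_consImage] at ha hb
        obtain ⟨⟨ha0, hat⟩, haS⟩ := ha
        obtain ⟨⟨hb0, hbt⟩, hbS⟩ := hb
        have htails : ∀ c : Vt (n+1), c 0 = false → c ∈
            (Sb.image (Fin.cons false) ∪ (Sa.image (Fin.cons false) ∪ Sa.image (Fin.cons true)))
            → Fin.tail c ∈ Sa ∪ Sb := by
          intro c hc0 hc
          rcases Finset.mem_union.1 hc with h | h
          · rw [mem_consImage] at h
            exact Finset.mem_union_right _ h.2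
          · rcases Finset.mem_union.1 h with h | h
            · rw [mem_consImage] at h
              exact Finset.mem_union_left _ h.2
            · rw [mem_consImage] at h
              rw [hc0] at h
              exact absurd h.1 (by simp)
        have hab : Fin.tail a = Fin.tail b :=
          hd1' _ (Finset.mem_inter.2 ⟨hat, htails a ha0 haS⟩)
            _ (Finset.mem_inter.2 ⟨hbt, htails b hb0 hbS⟩)
        exact eq_of_head_tail (by rw [ha0, hb0]) hab
      · rw [eOrb_map_false, if_pos rfl]
        rw [Finset.disjoint_left]
        intro a ha hc
        rw [mem_consImage] at ha hc
        exact Finset.disjoint_left.1 hd2 ha.2 hc.2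
      · refine hypT_congr (ih Sa (Sb ∪ eOrb (false, u)) hd3 l hnd) ?_ ?_
        · rw [Finset.image_union, eOrb_map_false]
          simp
        · simp
    · -- a-entry (true, u) ↦ b-entry (false, cons false u)
      simp only [Bool.not_true]
      simp only [if_pos rfl] at hd2 hd3
      refine ⟨?_, ?_, ?_⟩
      · rw [eOrb_map_true]
        apply Finset.card_le_one.2
        intro a ha b hb
        rw [Finset.mem_inter] at ha hb
        obtain ⟨haO, haS⟩ := ha
        obtain ⟨hbO, hbS⟩ := hb
        -- tails in eOrb, and (using disjointness from Sa) heads must be false, tails in Sb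
        have hkey : ∀ c : Vt (n+1),
            c ∈ ((eOrb (true, u)).image (Fin.cons false) ∪ (eOrb (true,u)).image (Fin.cons true))
            → c ∈ (Sb.image (Fin.cons false) ∪ (Sa.image (Fin.cons false) ∪ Sa.image (Fin.cons true)))
            → c 0 = false ∧ Fin.tail c ∈ eOrb (true, u) ∩ (Sa ∪ Sb) := by
          intro c hcO hcS
          have hctail : Fin.tail c ∈ eOrb (true, u) := by
            rcases Finset.mem_union.1 hcO with h | h <;> exact (mem_consImage.1 h).2
          have hnotSa : Fin.tail c ∉ Sa := fun hce => Finset.disjoint_left.1 hd2 hctail hce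
          rcases Finset.mem_union.1 hcS with h | h
          · rw [mem_consImage] at h
            exact ⟨h.1, Finset.mem_inter.2 ⟨hctail, Finset.mem_union_right _ h.2⟩⟩
          · rcases Finset.mem_union.1 h with h | h <;> rw [mem_consImage] at h <;>
              exact absurd h.2 hnotSa
        obtain ⟨ha0, hat⟩ := hkey a haO haS
        obtain ⟨hb0, hbt⟩ := hkey b hbO hbS
        exact eq_of_head_tail (by rw [ha0, hb0]) (hd1' _ hat _ hbt)
      · rw [eOrb_map_true, if_neg Bool.false_ne_true]
        rw [Finset.disjoint_left]
        intro a ha hc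
        have hatail : Fin.tail a ∈ eOrb (true, u) := by
          rcases Finset.mem_union.1 ha with h | h <;> exact (mem_consImage.1 h).2
        rcases Finset.mem_union.1 hc with h | h <;> rw [mem_consImage] at h <;>
          exact Finset.disjoint_left.1 hd2 hatail h.2
      · simp only [if_neg Bool.false_ne_true]
        refine hypT_congr (ih (Sa ∪ eOrb (true, u)) Sb hd3 l hnd) rfl ?_
        rw [Finset.image_union, Finset.image_union, eOrb_map_true]
        ext c
        simp only [Finset.mem_union]
        tauto

lemma hypT_basList : ∀ n : ℕ, HypT (basList n) ∅ ∅ := by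
  intro n
  induction n with
  | zero =>
    have h1 : eOrb ((true, fun i => i.elim0) : Bool × Vt 0) = {fun i => i.elim0} :=
      orbF_of_fixed (basGen_injective 0 true) rfl
    have h2 : eOrb ((false, fun i => i.elim0) : Bool × Vt 0) = {fun i => i.elim0} :=
      orbF_of_fixed (basGen_injective 0 false) rfl
    refine ⟨?_, ?_, ?_, ?_, trivial⟩
    · rw [h1]; simp
    · rw [h1, if_pos rfl]; simp
    · rw [h2, h1, if_pos rfl]
      calc ({fun i => i.elim0} ∩ ((∅ ∪ {fun i => i.elim0}) ∪ ∅) : Finset (Vt 0)).card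
          ≤ ({fun i => i.elim0} : Finset (Vt 0)).card :=
            Finset.card_le_card (Finset.inter_subset_left)
        _ = 1 := Finset.card_singleton _
    · rw [h2, if_neg Bool.false_ne_true]; simp
  | succ n ih =>
    rw [basList]
    refine hypT_congr
      (hypT_map_append n (basList n) ∅ ∅ ih (Finset.univ : Finset (Vt n)).toList
        (Finset.nodup_toList _)) ?_ ?_ <;> simp

end BasListSection
section HypTDerived

lemma hypT_disjoint_acc {n : ℕ} : ∀ (L : List (Bool × Vt n)) (Sa Sb : Finset (Vt n)),
    HypT L Sa Sb → ∀ q ∈ L, Disjoint (eOrb q) (if q.1 then Sa else Sb) := by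
  intro L
  induction L with
  | nil => intro Sa Sb _ q hq; simp at hq
  | cons p L ih =>
    rintro Sa Sb ⟨h1, h2, h3⟩ q hq
    rcases List.mem_cons.1 hq with rfl | hq'
    · exact h2
    · refine Disjoint.mono_right ?_ (ih _ _ h3 q hq')
      by_cases hq1 : q.1 = true <;> by_cases hp1 : p.1 = true <;>
        simp only [hq1, hp1, if_true, if_false, if_pos, if_neg] <;>
        first
          | exact le_refl _
          | exact Finset.subset_union_left
          | (rw [if_pos hq1, if_pos hq1, if_pos hp1]; exact Finset.subset_union_left)
          | (rw [if_pos hq1, if_pos hq1, if_neg hp1]; exact le_refl _)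
          | (rw [if_neg hq1, if_neg hq1, if_pos hp1]; exact le_refl _)
          | (rw [if_neg hq1, if_neg hq1, if_neg hp1]; exact Finset.subset_union_left)

lemma hypT_pairwise {n : ℕ} : ∀ (L : List (Bool × Vt n)) (Sa Sb : Finset (Vt n)),
    HypT L Sa Sb → L.Pairwise (fun p q => p.1 = q.1 → Disjoint (eOrb p) (eOrb q)) := by
  intro L
  induction L with
  | nil => intro _ _ _; exact List.Pairwise.nil
  | cons p L ih =>
    rintro Sa Sb ⟨h1, h2, h3⟩
    constructor
    · intro q hq htag
      have hd := hypT_disjoint_acc L _ _ h3 q hq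
      rw [← htag] at hd
      by_cases hp1 : p.1 = true
      · rw [if_pos hp1] at hd
        rw [if_pos hp1] at hd
        exact (Disjoint.mono_right Finset.subset_union_right hd).symm
      · rw [if_neg hp1] at hd
        rw [if_neg hp1] at hd
        exact (Disjoint.mono_right Finset.subset_union_right hd).symm
    · exact ih _ _ h3

lemma hyper_congr {V : Type} [Fintype V] [DecidableEq V] {ι : Type} {T : ι → Finset V}
    {L : List ι} {S S' : Finset V} (h : Hyper T L S) (he : S = S') : Hyper T L S' :=
  he ▸ h

lemma hypT_hyper {n : ℕ} : ∀ (L : List (Bool × Vt n)) (Sa Sb : Finset (Vt n)),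
    HypT L Sa Sb → Hyper eOrb L (Sa ∪ Sb) := by
  intro L
  induction L with
  | nil => intro _ _ _; trivial
  | cons p L ih =>
    rintro Sa Sb ⟨h1, h2, h3⟩
    refine ⟨h1, ?_⟩
    refine hyper_congr (ih _ _ h3) ?_
    by_cases hp1 : p.1 = true <;>
      [ (rw [if_pos hp1, if_pos hp1]); (rw [if_neg hp1, if_neg hp1])] <;>
      ext a <;> simp only [Finset.mem_union] <;> tauto

end HypTDerived

section Acyclicity

open Function

variable {n : ℕ}

/-- direction of an edge under a direction choice -/
def dirP (d : (basilicaStar n).Edge → Bool) (e : (basilicaStar n).Edge) : Vt n × Vt n :=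
  if d e then (e.1.2, basGen n e.1.1 e.1.2) else (basGen n e.1.1 e.1.2, e.1.2)

def stepR (d : (basilicaStar n).Edge → Bool) (u w : Vt n) : Prop :=
  ∃ e, dirP d e = (u, w)

/-- total direction function -/
noncomputable def Dd (d : (basilicaStar n).Edge → Bool) (t : Bool) (v : Vt n) : Bool :=
  if h : basGen n t v ≠ v then d ⟨(t,v), h⟩ else true

def NonCon (d : (basilicaStar n).Edge → Bool) : Prop :=
  ∀ (t : Bool) (v : Vt n), basGen n t v ≠ v →
    ¬ (∀ u ∈ orbF (basGen n t) v, Dd d t u = Dd d t v)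

lemma transGen_height {V : Type} {r : V → V → Prop} {f : V → ℤ}
    (hf : ∀ u w, r u w → f u < f w) {u w : V} (h : Relation.TransGen r u w) : f u < f w := by
  induction h with
  | single h => exact hf _ _ h
  | tail _ h2 ih => exact lt_trans ih (hf _ _ h2)

lemma acyclic_of_nonCon (d : (basilicaStar n).Edge → Bool) (hnc : NonCon d) :
    ∀ v : Vt n, ¬ Relation.TransGen (stepR d) v v := by
  set R : (Bool × Vt n) → Vt n → Vt n → Prop := fun p u w =>
    ∃ v, v ∈ eOrb p ∧ ∃ h : basGen n p.1 v ≠ v,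
      (if d ⟨(p.1, v), h⟩ then (v, basGen n p.1 v) else (basGen n p.1 v, v)) = (u, w)
    with hR
  have hloc : ∀ p ∈ basList n, ∀ u w, R p u w → u ∈ eOrb p ∧ w ∈ eOrb p := by
    rintro p _ u w ⟨v, hv, hmov, heq⟩
    have hgv : basGen n p.1 v ∈ eOrb p := apply_mem_orbF (basGen_injective n p.1) hv
    rcases hd : d ⟨(p.1, v), hmov⟩
    · rw [hd, if_neg Bool.false_ne_true] at heq
      injection heq with e1 e2
      subst e1; subst e2
      exact ⟨hgv, hv⟩
    · rw [hd, if_pos rfl] at heq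
      injection heq with e1 e2
      subst e1; subst e2
      exact ⟨hv, hgv⟩
  have hht : ∀ p ∈ basList n, ∃ h : Vt n → ℤ, ∀ u w, R p u w → h u < h w := by
    intro p _
    by_cases hmov : basGen n p.1 p.2 ≠ p.2
    · obtain ⟨h, hh⟩ := cycle_height (basGen_injective n p.1) p.2 hmov (Dd d p.1)
        (hnc p.1 p.2 hmov)
      refine ⟨h, ?_⟩
      rintro u w ⟨v, hv, hm, heq⟩
      have hDd : Dd d p.1 v = d ⟨(p.1, v), hm⟩ := dif_pos hm
      have hhv := hh v hv
      rcases hd : d ⟨(p.1, v), hm⟩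
      · rw [hd, if_neg Bool.false_ne_true] at heq
        injection heq with e1 e2
        subst e1; subst e2
        exact hhv.2 (by rw [hDd, hd])
      · rw [hd, if_pos rfl] at heq
        injection heq with e1 e2
        subst e1; subst e2
        exact hhv.1 (by rw [hDd, hd])
    · push_neg at hmov
      refine ⟨0, ?_⟩
      rintro u w ⟨v, hv, hm, -⟩
      have hv' : v ∈ orbF (basGen n p.1) p.2 := hv
      rw [orbF_of_fixed (basGen_injective n p.1) hmov, Finset.mem_singleton] at hv'
      exact absurd (hv' ▸ hmov) hm
  obtain ⟨f, -, hf⟩ := hyper_glue eOrb R (basList n) (∅ ∪ ∅) 0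
    (hypT_hyper _ _ _ (hypT_basList n)) hloc hht
  have hstep : ∀ u w, stepR d u w → f u < f w := by
    rintro u w ⟨⟨⟨t0, v0⟩, hm0⟩, he⟩
    obtain ⟨p, hp, htag, hmem⟩ := basList_cover n t0 v0
    subst htag
    exact hf p hp u w ⟨v0, hmem, hm0, he⟩
  intro v hv
  exact absurd (transGen_height hstep hv) (lt_irrefl _)

lemma nonCon_of_acyclic (d : (basilicaStar n).Edge → Bool)
    (hac : ∀ v : Vt n, ¬ Relation.TransGen (stepR d) v v) : NonCon d := by
  intro t v hmov hconst
  have hginj := basGen_injective n t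
  have hmper : (basGen n t)^[Function.minimalPeriod (basGen n t) v] v = v :=
    isPeriodicPt_mp hginj v
  have hmpos : 0 < Function.minimalPeriod (basGen n t) v := mp_pos hginj v
  have hmem : ∀ j : ℕ, (basGen n t)^[j] v ∈ orbF (basGen n t) v :=
    fun j => (mem_orbF_iff hginj).2 ⟨j, rfl⟩
  have hmove : ∀ j : ℕ, basGen n t ((basGen n t)^[j] v) ≠ (basGen n t)^[j] v :=
    fun j => moving_of_mem_orbF hginj (hmem j) hmov
  rcases hDv : Dd d t v
  · -- all edges directed (g u, u): build cycle going backwards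
    have hstep : ∀ j : ℕ, stepR d ((basGen n t)^[j+1] v) ((basGen n t)^[j] v) := by
      intro j
      refine ⟨⟨(t, (basGen n t)^[j] v), hmove j⟩, ?_⟩
      have hD : d ⟨(t, (basGen n t)^[j] v), hmove j⟩ = false := by
        have := hconst _ (hmem j)
        rw [hDv] at this
        rw [← this, Dd, dif_pos (hmove j)]
      unfold dirP; rw [hD, if_neg Bool.false_ne_true]
      rw [← Function.iterate_succ_apply' (basGen n t) j v]
    have hchain : ∀ j : ℕ, 1 ≤ j → Relation.TransGen (stepR d) ((basGen n t)^[j] v) v := by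
      intro j
      induction j with
      | zero => omega
      | succ j ih =>
        intro _
        rcases Nat.eq_or_lt_of_le (Nat.one_le_iff_ne_zero.2 (Nat.succ_ne_zero j)) with h1 | h1
        · have : j = 0 := by omega
          subst this
          exact Relation.TransGen.single (hstep 0)
        · exact Relation.TransGen.head (hstep j) (ih (by omega))
    have := hchain (Function.minimalPeriod (basGen n t) v) hmpos
    rw [hmper] at this
    exact hac v this
  · -- all edges directed (u, g u)
    have hstep : ∀ j : ℕ, stepR d ((basGen n t)^[j] v) ((basGen n t)^[j+1] v) := by
      intro j
      refine ⟨⟨(t, (basGen n t)^[j] v), hmove j⟩, ?_⟩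
      have hD : d ⟨(t, (basGen n t)^[j] v), hmove j⟩ = true := by
        have := hconst _ (hmem j)
        rw [hDv] at this
        rw [← this, Dd, dif_pos (hmove j)]
      unfold dirP; rw [hD, if_pos rfl]
      rw [← Function.iterate_succ_apply' (basGen n t) j v]
    have hchain : ∀ j : ℕ, 1 ≤ j → Relation.TransGen (stepR d) v ((basGen n t)^[j] v) := by
      intro j
      induction j with
      | zero => omega
      | succ j ih =>
        intro _
        rcases Nat.eq_or_lt_of_le (Nat.one_le_iff_ne_zero.2 (Nat.succ_ne_zero j)) with h1 | h1
        · have : j = 0 := by omega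
          subst this
          exact Relation.TransGen.single (hstep 0)
        · exact Relation.TransGen.tail (ih (by omega)) (hstep j)
    have := hchain (Function.minimalPeriod (basGen n t) v) hmpos
    rw [hmper] at this
    exact hac v this

end Acyclicity
section OrientEquiv

variable {n : ℕ}

lemma orient_eq_dirP {σ : (basilicaStar n).Edge → Vt n × Vt n}
    (hor : (basilicaStar n).IsOrientation σ) :
    σ = dirP (fun e => decide ((σ e).1 = e.1.2)) := by
  funext e
  obtain ⟨⟨t, v⟩, hm⟩ := e
  have h : s((σ ⟨(t,v),hm⟩).1, (σ ⟨(t,v),hm⟩).2) = s(v, basGen n t v) := hor ⟨(t,v), hm⟩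
  rw [Sym2.eq_iff] at h
  rcases h with ⟨h1, h2⟩ | ⟨h1, h2⟩
  · have hd : decide ((σ ⟨(t,v),hm⟩).1 = v) = true := by simp [h1]
    unfold dirP
    simp only [hd, if_pos rfl]
    exact Prod.ext h1 h2
  · have hd : decide ((σ ⟨(t,v),hm⟩).1 = v) = false := by
      simp only [h1, decide_eq_false_iff_not]
      exact hm
    unfold dirP
    simp only [hd, if_neg Bool.false_ne_true]
    exact Prod.ext h1 h2

lemma card_acyclic (n : ℕ) : (basilicaStar n).acyclicOrientationCount
    = Nat.card {d : (basilicaStar n).Edge → Bool // NonCon d} := by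
  rw [Multigraph.acyclicOrientationCount]
  apply Nat.card_congr
  refine {
    toFun := fun σs => ⟨fun e => decide ((σs.1 e).1 = e.1.2), ?_⟩
    invFun := fun ds => ⟨dirP ds.1, ?_, ?_⟩
    left_inv := ?_
    right_inv := ?_ }
  · -- NonCon of extracted direction
    apply nonCon_of_acyclic
    intro v hv
    apply σs.2.2 v
    have hσ : σs.1 = dirP (fun e => decide ((σs.1 e).1 = e.1.2)) := orient_eq_dirP σs.2.1
    rw [hσ]
    exact hv
  · -- dirP is an orientation
    intro e
    rcases hde : ds.1 e with _ | _ <;> rw [dirP, hde]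
    · rw [if_neg Bool.false_ne_true]
      exact Sym2.eq_swap
    · rw [if_pos rfl]
      rfl
  · -- acyclicity of dirP
    intro v hv
    exact acyclic_of_nonCon ds.1 ds.2 v hv
  · -- left inverse
    intro σs
    exact Subtype.ext (orient_eq_dirP σs.2.1).symm
  · -- right inverse
    intro ds
    apply Subtype.ext
    funext e
    rcases hde : ds.1 e with _ | _ <;> simp only [dirP, hde]
    · simp [e.2]
    · simp

end OrientEquiv
section Counting

open Function

lemma card_nonconst_fun (α : Type) [Fintype α] [DecidableEq α] [hne : Nonempty α] :
    Nat.card {g : α → Bool // ∃ x y, g x ≠ g y} = 2 ^ (Fintype.card α) - 2 := by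
  classical
  have e1 : {g : α → Bool // ¬ ∃ x y, g x ≠ g y} ≃ Bool :=
    { toFun := fun g => g.1 (Classical.arbitrary α)
      invFun := fun b => ⟨fun _ => b, by push_neg; exact fun x y => rfl⟩
      left_inv := by
        intro g
        apply Subtype.ext
        funext x
        have hg := g.2
        push_neg at hg
        exact hg (Classical.arbitrary α) x
      right_inv := fun b => rfl }
  have hneg : ((Finset.univ : Finset (α → Bool)).filter
      (fun g => ¬ ∃ x y, g x ≠ g y)).card = 2 := by
    rw [← Fintype.card_subtype, ← Nat.card_eq_fintype_card, Nat.card_congr e1,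
      Nat.card_eq_fintype_card, Fintype.card_bool]
  have hsplit := Finset.card_filter_add_card_filter_not
    (s := (Finset.univ : Finset (α → Bool))) (fun g => ∃ x y, g x ≠ g y)
  have htot : (Finset.univ : Finset (α → Bool)).card = 2 ^ Fintype.card α := by
    rw [Finset.card_univ, Fintype.card_fun, Fintype.card_bool]
  have hP : Nat.card {g : α → Bool // ∃ x y, g x ≠ g y}
      = Fintype.card {g : α → Bool // ∃ x y, g x ≠ g y} := Nat.card_eq_fintype_card
  have h6 : Fintype.card {g : α → Bool // ∃ x y, g x ≠ g y}
      = ((Finset.univ : Finset (α → Bool)).filter (fun g => ∃ x y, g x ≠ g y)).card :=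
    Fintype.card_subtype _
  rw [hneg] at hsplit
  rw [hP, h6, ← htot, ← hsplit]
  exact (Nat.add_sub_cancel _ _).symm

lemma card_noncon_empty (α : Type) [Fintype α] [IsEmpty α] (P : (α → Bool) → Prop)
    (hP : ∀ g, P g) : Nat.card {g : α → Bool // P g} = 1 := by
  haveI : Nonempty {g : α → Bool // P g} := ⟨⟨fun x => isEmptyElim x, hP _⟩⟩
  haveI : Subsingleton {g : α → Bool // P g} :=
    ⟨fun a b => Subtype.ext (funext fun x => isEmptyElim x)⟩
  exact Nat.card_unique

lemma eOrb_eq {n : ℕ} (p : Bool × Vt n) : eOrb p = orbF (basGen n p.1) p.2 := rfl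

lemma card_nonCon_eq_prod (n : ℕ) :
    Nat.card {d : (basilicaStar n).Edge → Bool // NonCon d} =
      ((basList n).map (fun p => if basGen n p.1 p.2 = p.2 then 1
          else 2 ^ ((eOrb p).card) - 2)).prod := by
  classical
  set L := basList n with hLdef
  have hexists : ∀ e : (basilicaStar n).Edge, ∃ i : Fin L.length,
      (L.get i).1 = e.1.1 ∧ e.1.2 ∈ eOrb (L.get i) := by
    intro e
    obtain ⟨p, hp, ht, hm⟩ := basList_cover n e.1.1 e.1.2
    obtain ⟨i, hi⟩ := List.mem_iff_get.1 hp
    exact ⟨i, by rw [hi]; exact ⟨ht, hm⟩⟩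
  choose idx hidx1 hidx2 using hexists
  have hpw := List.pairwise_iff_get.1 (hypT_pairwise L ∅ ∅ (hypT_basList n))
  have huniq : ∀ (e : (basilicaStar n).Edge) (i : Fin L.length),
      (L.get i).1 = e.1.1 → e.1.2 ∈ eOrb (L.get i) → idx e = i := by
    intro e i h1 h2
    by_contra hne
    have hdisj : Disjoint (eOrb (L.get (idx e))) (eOrb (L.get i)) := by
      rcases Nat.lt_or_ge ((idx e) : ℕ) (i : ℕ) with h | h
      · exact hpw (idx e) i h ((hidx1 e).trans h1.symm)
      · have hlt : (i : ℕ) < ((idx e) : ℕ) :=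
          lt_of_le_of_ne h (fun hc => hne (Fin.ext hc.symm))
        exact (hpw i (idx e) hlt (h1.trans (hidx1 e).symm)).symm
    exact Finset.disjoint_left.1 hdisj (hidx2 e) h2
  -- reformulate NonCon fiberwise
  have hiff : ∀ d : (basilicaStar n).Edge → Bool, NonCon d ↔
      ∀ i : Fin L.length, Nonempty {e // idx e = i} →
        ∃ x y : {e // idx e = i}, d x.1 ≠ d y.1 := by
    intro d
    constructor
    · intro hd i ⟨e0⟩
      obtain ⟨e, he⟩ := e0
      have htag : (L.get i).1 = e.1.1 := he ▸ hidx1 e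
      have hmem : e.1.2 ∈ eOrb (L.get i) := he ▸ hidx2 e
      have hginj := basGen_injective n e.1.1
      have hthis := hd e.1.1 e.1.2 e.2
      push_neg at hthis
      obtain ⟨u, hu, hune⟩ := hthis
      have humov : basGen n e.1.1 u ≠ u := moving_of_mem_orbF hginj hu e.2
      have hmemL : e.1.2 ∈ orbF (basGen n e.1.1) (L.get i).2 := by
        have h' := hmem
        rw [eOrb_eq, htag] at h'
        exact h'
      have huorb : u ∈ eOrb (L.get i) := by
        have ho : orbF (basGen n e.1.1) e.1.2 = orbF (basGen n e.1.1) (L.get i).2 :=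
          orbF_eq_of_mem hginj hmemL
        have h2 : u ∈ orbF (basGen n e.1.1) (L.get i).2 := ho ▸ hu
        rw [eOrb_eq, htag]
        exact h2
      set eu : (basilicaStar n).Edge := ⟨(e.1.1, u), humov⟩ with heu
      have hidxeu : idx eu = i := huniq eu i htag huorb
      refine ⟨⟨eu, hidxeu⟩, ⟨e, he⟩, ?_⟩
      have h1 : Dd d e.1.1 u = d eu := dif_pos humov
      have h2 : Dd d e.1.1 e.1.2 = d e := dif_pos e.2
      rw [← h1, ← h2]
      exact hune
    · intro h t v hmov hconst
      set e : (basilicaStar n).Edge := ⟨(t, v), hmov⟩ with hedef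
      obtain ⟨x, y, hxy⟩ := h (idx e) ⟨⟨e, rfl⟩⟩
      have hginj := basGen_injective n t
      have htagL : (L.get (idx e)).1 = t := hidx1 e
      have hvL : v ∈ eOrb (L.get (idx e)) := hidx2 e
      have hvL' : v ∈ orbF (basGen n t) (L.get (idx e)).2 := by
        have h' := hvL
        rw [eOrb_eq, htagL] at h'
        exact h'
      have horb : eOrb (L.get (idx e)) = orbF (basGen n t) v := by
        rw [eOrb_eq, htagL]
        exact (orbF_eq_of_mem hginj hvL').symm
      have hval : ∀ z : {e' // idx e' = idx e}, d z.1 = Dd d t v := by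
        rintro ⟨z, hz⟩
        have h' : (L.get (idx e)).1 = z.1.1 := by
          rw [← hz]; exact hidx1 z
        have hztag : z.1.1 = t := by rw [← h']; exact htagL
        have hzmem : z.1.2 ∈ orbF (basGen n t) v := by
          rw [← horb, ← hz]; exact hidx2 z
        have hzmov : basGen n t z.1.2 ≠ z.1.2 := by rw [← hztag] at *; exact z.2
        have hze : z = ⟨(t, z.1.2), hzmov⟩ := by
          apply Subtype.ext
          exact Prod.ext hztag rfl
        have h1 : Dd d t z.1.2 = d ⟨(t, z.1.2), hzmov⟩ := dif_pos hzmov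
        rw [congrArg d hze, ← h1]
        exact hconst z.1.2 hzmem
      exact hxy ((hval x).trans (hval y).symm)
  have e2 : {d : (basilicaStar n).Edge → Bool // NonCon d} ≃
      ∀ i : Fin L.length, {g : {e // idx e = i} → Bool //
        Nonempty {e // idx e = i} → ∃ x y, g x ≠ g y} := by
    refine Equiv.trans (Equiv.subtypeEquivRight hiff) ?_
    have hkey : ∀ (h : ∀ i : Fin L.length, {g : {e // idx e = i} → Bool //
          Nonempty {e // idx e = i} → ∃ x y, g x ≠ g y})
        (i : Fin L.length) (x : {e // idx e = i}),
        (h (idx x.1)).1 ⟨x.1, rfl⟩ = (h i).1 x := by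
      rintro h i ⟨e, rfl⟩; rfl
    refine {
      toFun := fun d i => ⟨fun x => d.1 x.1, fun hne => d.2 i hne⟩
      invFun := fun h => ⟨fun e => (h (idx e)).1 ⟨e, rfl⟩, ?_⟩
      left_inv := fun d => Subtype.ext rfl
      right_inv := ?_ }
    · intro i hne
      obtain ⟨x, y, hxy⟩ := (h i).2 hne
      refine ⟨x, y, ?_⟩
      show (h (idx x.1)).1 ⟨x.1, rfl⟩ ≠ (h (idx y.1)).1 ⟨y.1, rfl⟩
      rw [hkey h i x, hkey h i y]
      exact hxy
    · intro h
      funext i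
      apply Subtype.ext
      funext x
      exact hkey h i x
  rw [Nat.card_congr e2, Nat.card_pi]
  have hfib : ∀ i : Fin L.length,
      Nat.card {g : {e // idx e = i} → Bool //
        Nonempty {e // idx e = i} → ∃ x y, g x ≠ g y} =
      (if basGen n (L.get i).1 (L.get i).2 = (L.get i).2 then 1
          else 2 ^ ((eOrb (L.get i)).card) - 2) := by
    intro i
    by_cases htriv : basGen n (L.get i).1 (L.get i).2 = (L.get i).2
    · rw [if_pos htriv]
      haveI : IsEmpty {e // idx e = i} := by
        refine ⟨fun x => ?_⟩
        have hmem := x.2 ▸ hidx2 x.1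
        have htag := x.2 ▸ hidx1 x.1
        have : eOrb (L.get i) = {(L.get i).2} :=
          orbF_of_fixed (basGen_injective n (L.get i).1) htriv
        rw [this, Finset.mem_singleton] at hmem
        apply x.1.2
        rw [htag, ← hmem] at htriv
        exact htriv
      exact card_noncon_empty _ _ (fun g hne => absurd hne (by simp [not_nonempty_iff.2]))
    · rw [if_neg htriv]
      haveI : Nonempty {e // idx e = i} :=
        ⟨⟨⟨((L.get i).1, (L.get i).2), htriv⟩, huniq _ i rfl
          (self_mem_orbF (basGen_injective n (L.get i).1) _)⟩⟩
      have e3 : {g : {e // idx e = i} → Bool //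
            Nonempty {e // idx e = i} → ∃ x y, g x ≠ g y} ≃
          {g : {e // idx e = i} → Bool // ∃ x y, g x ≠ g y} :=
        Equiv.subtypeEquivRight (fun g => ⟨fun h => h inferInstance, fun h _ => h⟩)
      rw [Nat.card_congr e3, card_nonconst_fun]
      congr 1
      have e4 : {e // idx e = i} ≃ {u // u ∈ eOrb (L.get i)} := {
        toFun := fun e => ⟨e.1.1.2, by
          obtain ⟨e', he'⟩ := e
          exact he' ▸ hidx2 e'⟩
        invFun := fun u => ⟨⟨((L.get i).1, u.1),
            moving_of_mem_orbF (basGen_injective n (L.get i).1) u.2 htriv⟩,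
          huniq _ i rfl u.2⟩
        left_inv := by
          rintro ⟨e, he⟩
          apply Subtype.ext
          apply Subtype.ext
          exact Prod.ext (he ▸ hidx1 e) rfl
        right_inv := fun u => rfl }
      rw [← Nat.card_eq_fintype_card, Nat.card_congr e4, Nat.card_eq_fintype_card,
        Fintype.card_coe]
  rw [Finset.prod_congr rfl (fun i _ => hfib i)]
  conv_rhs => rw [← List.ofFn_get L]
  rw [List.map_ofFn, List.prod_ofFn]
  rfl

end Counting
section Arith

open Function

def w1 (m : ℕ) : ℕ := if m = 1 then 1 else 2 ^ m - 2

noncomputable def tagProd (n : ℕ) (f g : ℕ → ℕ) : ℕ :=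
  ((basList n).map (fun p => if p.1 then f (Function.minimalPeriod (basGen n p.1) p.2)
      else g (Function.minimalPeriod (basGen n p.1) p.2))).prod

noncomputable def statProd (n : ℕ) : ℕ := tagProd n w1 w1

lemma mp_basGen_zero (t : Bool) (v : Vt 0) :
    Function.minimalPeriod (basGen 0 t) v = 1 :=
  (mp_eq_one_iff _).2 (by cases t <;> rfl)

lemma tagProd_zero (f g : ℕ → ℕ) : tagProd 0 f g = f 1 * g 1 := by
  rw [tagProd]
  show ((basList 0).map _).prod = _
  rw [basList]
  simp only [List.map_cons, List.map_nil, List.prod_cons, List.prod_nil]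
  rw [if_pos trivial, if_neg Bool.false_ne_true, mp_basGen_zero, mp_basGen_zero, mul_one]

lemma card_Vt (n : ℕ) : Fintype.card (Vt n) = 2 ^ n := by
  rw [Fintype.card_fun, Fintype.card_bool, Fintype.card_fin]

lemma tagProd_succ (n : ℕ) (f g : ℕ → ℕ) :
    tagProd (n+1) f g = (f 1) ^ (2^n) * tagProd n (fun m => g (2*m)) f := by
  rw [tagProd, basList, List.map_append, List.prod_append, List.map_map, List.map_map]
  have h1 : ((fun p : Bool × Vt (n+1) => if p.1 then f (Function.minimalPeriod (basGen (n+1) p.1) p.2)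
        else g (Function.minimalPeriod (basGen (n+1) p.1) p.2)) ∘
      (fun p : Bool × Vt n => (!p.1, Fin.cons false p.2))) =
      (fun p : Bool × Vt n => if p.1 then (fun m => g (2*m)) (Function.minimalPeriod (basGen n p.1) p.2)
        else f (Function.minimalPeriod (basGen n p.1) p.2)) := by
    funext p
    obtain ⟨t, u⟩ := p
    simp only [Function.comp_apply]
    cases t
    · simp only [Bool.not_false]
      rw [if_pos trivial, if_neg Bool.false_ne_true]
      show f (Function.minimalPeriod (basA (n+1)) (Fin.cons false u))
        = f (Function.minimalPeriod (basB n) u)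
      rw [mpA_cons_false]
    · simp only [Bool.not_true]
      rw [if_neg Bool.false_ne_true, if_pos trivial]
      show g (Function.minimalPeriod (basB (n+1)) (Fin.cons false u))
        = g (2 * Function.minimalPeriod (basA n) u)
      rw [mpB_cons]
  have h2 : ((fun p : Bool × Vt (n+1) => if p.1 then f (Function.minimalPeriod (basGen (n+1) p.1) p.2)
        else g (Function.minimalPeriod (basGen (n+1) p.1) p.2)) ∘
      (fun w : Vt n => (true, Fin.cons true w))) = (fun _ => f 1) := by
    funext w
    simp only [Function.comp_apply]
    rw [if_pos trivial]
    show f (Function.minimalPeriod (basA (n+1)) (Fin.cons true w)) = f 1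
    rw [mpA_cons_true]
  rw [h1, h2]
  have h3 : (List.map (fun _ => f 1) (Finset.univ : Finset (Vt n)).toList).prod
      = (f 1) ^ (2 ^ n) := by
    have : List.map (fun _ => f 1) (Finset.univ : Finset (Vt n)).toList
        = List.replicate (Finset.univ : Finset (Vt n)).toList.length (f 1) := by
      rw [List.map_const']
    rw [this, List.prod_replicate, Finset.length_toList, Finset.card_univ, card_Vt]
  rw [h3, mul_comm]
  rfl

lemma wt_eq (n : ℕ) (p : Bool × Vt n) :
    (if basGen n p.1 p.2 = p.2 then 1 else 2 ^ ((eOrb p).card) - 2)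
      = w1 (Function.minimalPeriod (basGen n p.1) p.2) := by
  rw [eOrb_eq, card_orbF (basGen_injective n p.1)]
  by_cases h : basGen n p.1 p.2 = p.2
  · rw [if_pos h, w1, if_pos ((mp_eq_one_iff _).2 h)]
  · rw [if_neg h, w1, if_neg (fun hc => h ((mp_eq_one_iff _).1 hc))]

lemma count_eq_statProd (n : ℕ) :
    (basilicaStar n).acyclicOrientationCount = statProd n := by
  rw [card_acyclic, card_nonCon_eq_prod, statProd, tagProd]
  congr 1
  apply List.map_congr_left
  intro p _
  rw [wt_eq, ite_self]

lemma statProd_one : statProd 1 = 2 := by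
  rw [statProd, tagProd_succ, tagProd_zero]
  norm_num [w1]

lemma statProd_two : statProd 2 = 2 ^ 3 := by
  rw [statProd, tagProd_succ, tagProd_succ, tagProd_zero]
  norm_num [w1]

lemma statProd_three : statProd 3 = 2 ^ 5 * 7 := by
  rw [statProd, tagProd_succ, tagProd_succ, tagProd_succ, tagProd_zero]
  norm_num [w1]

end Arith
section ClosedForm

lemma tagProd_closed : ∀ (n j k : ℕ),
    tagProd n (fun m => w1 (2^j * m)) (fun m => w1 (2^k * m)) =
      (∏ s ∈ Finset.range n,
        (w1 (2^(if s % 2 = 0 then j + s/2 else k + (s+1)/2))) ^ (2^(n-1-s)))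
        * w1 (2^(if n % 2 = 0 then j + n/2 else k + (n+1)/2))
        * w1 (2^(if n % 2 = 0 then k + n/2 else j + n/2)) := by
  intro n
  induction n with
  | zero =>
    intro j k
    rw [tagProd_zero]
    norm_num
  | succ n ih =>
    intro j k
    rw [tagProd_succ]
    have harg : (fun m => (fun m' => w1 (2^k * m')) (2*m)) = (fun m => w1 (2^(k+1) * m)) := by
      funext m
      show w1 (2^k * (2*m)) = w1 (2^(k+1) * m)
      congr 1
      ring
    rw [harg, ih (k+1) j, Finset.prod_range_succ']
    have hprod : ∀ s, s ∈ Finset.range n →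
        (w1 (2^(if (s+1) % 2 = 0 then j + (s+1)/2 else k + (s+1+1)/2))) ^ (2^(n+1-1-(s+1)))
        = (w1 (2^(if s % 2 = 0 then (k+1) + s/2 else j + (s+1)/2))) ^ (2^(n-1-s)) := by
      intro s _
      have hexp : n+1-1-(s+1) = n-1-s := by omega
      have harg2 : (if (s+1) % 2 = 0 then j + (s+1)/2 else k + (s+1+1)/2)
          = (if s % 2 = 0 then (k+1) + s/2 else j + (s+1)/2) := by
        rcases Nat.mod_two_eq_zero_or_one s with h | h
        · rw [if_neg (by omega), if_pos h]
          omega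
        · rw [if_pos (by omega), if_neg (by omega)]
          try omega
      rw [hexp, harg2]
    have hB1 : (if (n+1) % 2 = 0 then j + (n+1)/2 else k + (n+1+1)/2)
        = (if n % 2 = 0 then (k+1) + n/2 else j + (n+1)/2) := by
      rcases Nat.mod_two_eq_zero_or_one n with h | h
      · rw [if_neg (by omega), if_pos h]
        omega
      · rw [if_pos (by omega), if_neg (by omega)]
    have hB2 : (if (n+1) % 2 = 0 then k + (n+1)/2 else j + (n+1)/2)
        = (if n % 2 = 0 then j + n/2 else (k+1) + n/2) := by
      rcases Nat.mod_two_eq_zero_or_one n with h | h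
      · rw [if_neg (by omega), if_pos h]
        omega
      · rw [if_pos (by omega), if_neg (by omega)]
        try omega
    rw [Finset.prod_congr rfl hprod, hB1, hB2]
    have hF0 : (w1 (2 ^ (if 0 % 2 = 0 then j + 0/2 else k + (0+1)/2))) ^ (2^(n+1-1-0))
        = (w1 (2^j * 1)) ^ (2^n) := by
      norm_num
    rw [hF0]
    ring
end ClosedForm
section FinalAssembly

lemma w1_one : w1 1 = 1 := rfl

lemma w1_pow2 {i : ℕ} (hi : 1 ≤ i) : w1 (2^i) = 2^(2^i) - 2 := by
  rw [w1, if_neg]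
  have : 2^1 ≤ 2^i := Nat.pow_le_pow_right (by norm_num) hi
  omega

lemma statProd_closed (n : ℕ) :
    statProd n = (∏ s ∈ Finset.range n, (w1 (2^((s+1)/2)))^(2^(n-1-s)))
      * w1 (2^((n+1)/2)) * w1 (2^(n/2)) := by
  have h0 : statProd n = tagProd n (fun m => w1 (2^0 * m)) (fun m => w1 (2^0 * m)) := by
    rw [statProd]
    have : (fun m => w1 (2^0 * m)) = w1 := by funext m; norm_num
    rw [this]
  rw [h0, tagProd_closed]
  have hB1 : (if n % 2 = 0 then 0 + n/2 else 0 + (n+1)/2) = (n+1)/2 := by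
    rcases Nat.mod_two_eq_zero_or_one n with h | h
    · rw [if_pos h]; omega
    · rw [if_neg (by omega)]; omega
  have hB2 : (if n % 2 = 0 then 0 + n/2 else 0 + n/2) = n/2 := by
    rw [ite_self]; omega
  have hP : ∀ s, s ∈ Finset.range n →
      (w1 (2^(if s % 2 = 0 then 0 + s/2 else 0 + (s+1)/2)))^(2^(n-1-s))
        = (w1 (2^((s+1)/2)))^(2^(n-1-s)) := by
    intro s _
    have : (if s % 2 = 0 then 0 + s/2 else 0 + (s+1)/2) = (s+1)/2 := by
      rcases Nat.mod_two_eq_zero_or_one s with h | h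
      · rw [if_pos h]; omega
      · rw [if_neg (by omega)]; omega
    rw [this]
  rw [Finset.prod_congr rfl hP, hB1, hB2]

lemma prod_pair (F : ℕ → ℕ) (m : ℕ) :
    ∏ s ∈ Finset.range (2*m), F s = ∏ i ∈ Finset.range m, (F (2*i) * F (2*i+1)) := by
  induction m with
  | zero => simp
  | succ m ih =>
    have h2 : 2*(m+1) = (2*m+1)+1 := by ring
    rw [h2, Finset.prod_range_succ, Finset.prod_range_succ, Finset.prod_range_succ, ih,
      mul_assoc]

lemma prod_Icc_one (h : ℕ → ℕ) (K : ℕ) :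
    ∏ i ∈ Finset.Icc 1 K, h i = ∏ i ∈ Finset.range K, h (i+1) := by
  induction K with
  | zero => simp
  | succ K ih =>
    rw [Finset.prod_Icc_succ_top (by omega), ih, Finset.prod_range_succ]

lemma statProd_odd (m : ℕ) (hm : 1 ≤ m) :
    statProd (2*m+1) = (w1 (2^m))^4 * w1 (2^(m+1)) *
      ∏ i ∈ Finset.Icc 1 (m-1), (w1 (2^i))^(3 * 2^(2*m-2*i)) := by
  rw [statProd_closed]
  have e1 : (2*m+1+1)/2 = m+1 := by omega
  have e2 : (2*m+1)/2 = m := by omega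
  rw [e1, e2]
  set T : ℕ → ℕ := fun s => (w1 (2^((s+1)/2)))^(2^(2*m+1-1-s)) with hT
  have hsplit : ∏ s ∈ Finset.range (2*m+1), T s = (∏ s ∈ Finset.range (2*m), T (s+1)) * T 0 :=
    Finset.prod_range_succ' T (2*m)
  have hT0 : T 0 = 1 := by
    rw [hT]
    norm_num [w1_one]
  have hpair : ∏ s ∈ Finset.range (2*m), T (s+1)
      = ∏ i ∈ Finset.range m, (T (2*i+1) * T (2*i+2)) :=
    prod_pair (fun s => T (s+1)) m
  have hterm : ∀ i, i ∈ Finset.range m → T (2*i+1) * T (2*i+2)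
      = (w1 (2^(i+1)))^(3 * 2^(2*m-2*i-2)) := by
    intro i hi
    have him : i < m := Finset.mem_range.1 hi
    rw [hT]
    beta_reduce
    have a1 : (2*i+1+1)/2 = i+1 := by omega
    have a2 : (2*i+2+1)/2 = i+1 := by omega
    have b1 : 2*m+1-1-(2*i+1) = (2*m-2*i-2)+1 := by omega
    have b2 : 2*m+1-1-(2*i+2) = 2*m-2*i-2 := by omega
    rw [a1, a2, b1, b2, ← pow_add]
    congr 1
    rw [pow_succ]
    ring
  have hpeel : ∏ i ∈ Finset.range m, (w1 (2^(i+1)))^(3 * 2^(2*m-2*i-2))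
      = (∏ i ∈ Finset.range (m-1), (w1 (2^(i+1)))^(3 * 2^(2*m-2*i-2)))
        * (w1 (2^m))^3 := by
    conv_lhs => rw [show Finset.range m = Finset.range ((m-1)+1) by rw [Nat.sub_add_cancel hm]]
    rw [Finset.prod_range_succ]
    congr 1
    have c1 : m-1+1 = m := by omega
    have c2 : 2*m-2*(m-1)-2 = 0 := by omega
    rw [c1, c2]
    norm_num
  have hicc : ∏ i ∈ Finset.Icc 1 (m-1), (w1 (2^i))^(3 * 2^(2*m-2*i))
      = ∏ i ∈ Finset.range (m-1), (w1 (2^(i+1)))^(3 * 2^(2*m-2*i-2)) := by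
    rw [prod_Icc_one]
    apply Finset.prod_congr rfl
    intro i hi
    have : 2*m-2*(i+1) = 2*m-2*i-2 := by omega
    rw [this]
  rw [hsplit, hT0, mul_one, hpair, Finset.prod_congr rfl hterm, hpeel, hicc]
  ring

lemma statProd_even (m : ℕ) (hm : 1 ≤ m) :
    statProd (2*m) = (w1 (2^m))^3 *
      ∏ i ∈ Finset.Icc 1 (m-1), (w1 (2^i))^(3 * 2^(2*m-2*i-1)) := by
  rw [statProd_closed]
  have e1 : (2*m+1)/2 = m := by omega
  have e2 : (2*m)/2 = m := by omega
  rw [e1, e2]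
  set T : ℕ → ℕ := fun s => (w1 (2^((s+1)/2)))^(2^(2*m-1-s)) with hT
  have hsplit : ∏ s ∈ Finset.range (2*m), T s
      = (∏ s ∈ Finset.range (2*m-1), T (s+1)) * T 0 := by
    conv_lhs => rw [show Finset.range (2*m) = Finset.range ((2*m-1)+1) by
      rw [Nat.sub_add_cancel (by omega)]]
    exact Finset.prod_range_succ' T (2*m-1)
  have hT0 : T 0 = 1 := by
    rw [hT]
    norm_num [w1_one]
  have h2m1 : 2*m-1 = 2*(m-1)+1 := by omega
  have hsplit2 : ∏ s ∈ Finset.range (2*m-1), T (s+1)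
      = (∏ s ∈ Finset.range (2*(m-1)), T (s+1)) * T (2*m-1) := by
    conv_lhs => rw [show Finset.range (2*m-1) = Finset.range (2*(m-1)+1) by rw [← h2m1]]
    rw [Finset.prod_range_succ]
    congr 2
    omega
  have hTtop : T (2*m-1) = w1 (2^m) := by
    rw [hT]
    beta_reduce
    have a1 : (2*m-1+1)/2 = m := by omega
    have a2 : 2*m-1-(2*m-1) = 0 := by omega
    rw [a1, a2]
    norm_num
  have hpair : ∏ s ∈ Finset.range (2*(m-1)), T (s+1)
      = ∏ i ∈ Finset.range (m-1), (T (2*i+1) * T (2*i+2)) :=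
    prod_pair (fun s => T (s+1)) (m-1)
  have hterm : ∀ i, i ∈ Finset.range (m-1) → T (2*i+1) * T (2*i+2)
      = (w1 (2^(i+1)))^(3 * 2^(2*m-2*i-3)) := by
    intro i hi
    have him : i < m-1 := Finset.mem_range.1 hi
    rw [hT]
    beta_reduce
    have a1 : (2*i+1+1)/2 = i+1 := by omega
    have a2 : (2*i+2+1)/2 = i+1 := by omega
    have b1 : 2*m-1-(2*i+1) = (2*m-2*i-3)+1 := by omega
    have b2 : 2*m-1-(2*i+2) = 2*m-2*i-3 := by omega
    rw [a1, a2, b1, b2, ← pow_add]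
    congr 1
    rw [pow_succ]
    ring
  have hicc : ∏ i ∈ Finset.Icc 1 (m-1), (w1 (2^i))^(3 * 2^(2*m-2*i-1))
      = ∏ i ∈ Finset.range (m-1), (w1 (2^(i+1)))^(3 * 2^(2*m-2*i-3)) := by
    rw [prod_Icc_one]
    apply Finset.prod_congr rfl
    intro i hi
    have : 2*m-2*(i+1)-1 = 2*m-2*i-3 := by omega
    rw [this]
  rw [hsplit, hT0, mul_one, hsplit2, hTtop, hpair, Finset.prod_congr rfl hterm, hicc]
  ring

end FinalAssembly
/-- The number of acyclic orientations of the loopless Schreier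
graph `B_n*` of the Basilica group: for `n ≥ 4` odd it is
`(2^(2^((n-1)/2)) - 2)^4 (2^(2^((n+1)/2)) - 2)
  ∏_{i=1}^{(n-1)/2-1} (2^(2^i) - 2)^(3·2^(n-2i-1))`;
for `n ≥ 4` even it is
`(2^(2^(n/2)) - 2)^3 ∏_{i=1}^{n/2-1} (2^(2^i) - 2)^(3·2^(n-2i-1))`.
Moreover, the counts for `n = 1, 2, 3` are `2`, `2³` and `2⁵·7`. -/
theorem acyclicOrientationCount_basilicaStar :
    (∀ n : ℕ, 4 ≤ n → Odd n →
      (basilicaStar n).acyclicOrientationCount =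
        (2 ^ (2 ^ ((n - 1) / 2)) - 2) ^ 4 * (2 ^ (2 ^ ((n + 1) / 2)) - 2) *
          ∏ i ∈ Finset.Icc 1 ((n - 1) / 2 - 1),
            (2 ^ (2 ^ i) - 2) ^ (3 * 2 ^ (n - 2 * i - 1))) ∧
    (∀ n : ℕ, 4 ≤ n → Even n →
      (basilicaStar n).acyclicOrientationCount =
        (2 ^ (2 ^ (n / 2)) - 2) ^ 3 *
          ∏ i ∈ Finset.Icc 1 (n / 2 - 1),
            (2 ^ (2 ^ i) - 2) ^ (3 * 2 ^ (n - 2 * i - 1))) ∧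
    (basilicaStar 1).acyclicOrientationCount = 2 ∧
    (basilicaStar 2).acyclicOrientationCount = 2 ^ 3 ∧
    (basilicaStar 3).acyclicOrientationCount = 2 ^ 5 * 7 := by
  refine ⟨?_, ?_, ?_, ?_, ?_⟩
  · intro n hn hodd
    obtain ⟨m, rfl⟩ := hodd
    have hm : 2 ≤ m := by omega
    rw [count_eq_statProd, statProd_odd m (by omega)]
    have e1 : (2*m+1-1)/2 = m := by omega
    have e2 : (2*m+1+1)/2 = m+1 := by omega
    rw [e1, e2, w1_pow2 (by omega : 1 ≤ m), w1_pow2 (by omega : 1 ≤ m+1)]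
    congr 1
    apply Finset.prod_congr rfl
    intro i hi
    obtain ⟨hi1, hi2⟩ := Finset.mem_Icc.1 hi
    rw [w1_pow2 hi1]
    have he : 3 * 2^(2*m-2*i) = 3 * 2^(2*m+1-2*i-1) := by
      rw [show 2*m+1-2*i-1 = 2*m-2*i by omega]
    rw [he]
  · intro n hn heven
    obtain ⟨m, rfl⟩ := heven
    rw [show m+m = 2*m by ring] at *
    have hm : 2 ≤ m := by omega
    rw [count_eq_statProd, statProd_even m (by omega)]
    have e1 : (2*m)/2 = m := by omega
    rw [e1, w1_pow2 (by omega : 1 ≤ m)]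
    congr 1
    apply Finset.prod_congr rfl
    intro i hi
    obtain ⟨hi1, hi2⟩ := Finset.mem_Icc.1 hi
    rw [w1_pow2 hi1]
  · rw [count_eq_statProd]
    exact statProd_one
  · rw [count_eq_statProd]
    exact statProd_two
  · rw [count_eq_statProd]
    exact statProd_three
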